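/- Let A, B ∈ ℂ^{n×n} be Hermitian with B positive definite, z ∈ ℂ with Im z ≠ 0, b ∈ ℂⁿ, y* = (zB - A)^{-1} b, and ỹ ∈ ℂⁿ arbitrary with residual r̃ = b - (zB - A) ỹ. Then for every index i, |ỹ_i − y*_i| ≤ |Im z|^{-1} · λ_min(B)^{-1} · ‖r̃‖₂, where λ_min(B) is the smallest eigenvalue of B. -/

import Mathlib

open scoped ComplexOrder

open Matrix in
lemma herm_dot_real {n : Type*} [Fintype n] {A : Matrix n n ℂ} (hA : A.IsHermitian)
    (x : n → ℂ) : (star x ⬝ᵥ A *ᵥ x).im = 0 := by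
  rw [← Complex.conj_eq_iff_im]
  calc (starRingEnd ℂ) (star x ⬝ᵥ A *ᵥ x) = star (star x ⬝ᵥ A *ᵥ x) := rfl
    _ = star (A *ᵥ x) ⬝ᵥ x := (Matrix.star_dotProduct _ _).symm
    _ = star x ⬝ᵥ A *ᵥ x := by rw [star_mulVec, hA.eq, dotProduct_mulVec]

open Matrix in
lemma eucl_norm_sq {n : Type*} [Fintype n] (x : n → ℂ) :
    ‖(WithLp.equiv 2 (n → ℂ)).symm x‖ ^ 2 = (star x ⬝ᵥ x).re := by
  have h : inner ℂ ((WithLp.equiv 2 (n → ℂ)).symm x) ((WithLp.equiv 2 (n → ℂ)).symm x) = star x ⬝ᵥ x := by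
    rw [dotProduct_comm]; rfl
  have h2 : (inner ℂ ((WithLp.equiv 2 (n → ℂ)).symm x) ((WithLp.equiv 2 (n → ℂ)).symm x) : ℂ)
      = (‖(WithLp.equiv 2 (n → ℂ)).symm x‖ : ℂ) ^ 2 := inner_self_eq_norm_sq_to_K _
  rw [h2] at h
  have := congrArg Complex.re h
  rw [← this]
  simp [← Complex.ofReal_pow]

open Matrix in
lemma eig_min_bound {n : Type*} [Fintype n] [DecidableEq n] [Nonempty n]
    {B : Matrix n n ℂ} (hB : B.PosDef) (x : n → ℂ) :
    (⨅ i, hB.1.eigenvalues i) * ‖(WithLp.equiv 2 (n → ℂ)).symm x‖ ^ 2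
      ≤ (star x ⬝ᵥ B *ᵥ x).re := by
  set hH := hB.1
  set U : Matrix n n ℂ := (hH.eigenvectorUnitary : Matrix n n ℂ)
  set y : n → ℂ := star U *ᵥ x with hy
  have hUy : star y = star x ᵥ* U := by
    rw [hy, star_mulVec, Matrix.star_eq_conjTranspose, Matrix.conjTranspose_conjTranspose]
  have key : star x ⬝ᵥ B *ᵥ x
      = star y ⬝ᵥ (diagonal (RCLike.ofReal ∘ hH.eigenvalues) *ᵥ y) := by
    conv_lhs => rw [hH.spectral_theorem]
    rw [Unitary.conjStarAlgAut_apply, ← Matrix.mulVec_mulVec, ← Matrix.mulVec_mulVec, dotProduct_mulVec, ← hUy, hy]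
  have hUU : U * star U = 1 := (Matrix.mem_unitaryGroup_iff).mp hH.eigenvectorUnitary.2
  have hyy : star y ⬝ᵥ y = star x ⬝ᵥ x := by
    rw [hUy, hy, ← dotProduct_mulVec, Matrix.mulVec_mulVec, hUU, Matrix.one_mulVec]
  have hsum : (star x ⬝ᵥ B *ᵥ x).re = ∑ i, hH.eigenvalues i * Complex.normSq (y i) := by
    rw [key]
    simp only [dotProduct, Pi.star_apply, mulVec_diagonal, Function.comp_apply]
    rw [Complex.re_sum]
    congr 1; funext i
    have : star (y i) * ((hH.eigenvalues i : ℂ) * y i)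
        = (hH.eigenvalues i : ℂ) * (Complex.normSq (y i) : ℂ) := by
      rw [Complex.star_def, Complex.normSq_eq_conj_mul_self]; ring
    show (star (y i) * ((hH.eigenvalues i : ℂ) * y i)).re = _
    rw [this]
    simp
  have hnx : ‖(WithLp.equiv 2 (n → ℂ)).symm x‖ ^ 2 = ∑ i, Complex.normSq (y i) := by
    rw [eucl_norm_sq, ← hyy]
    simp only [dotProduct, Pi.star_apply, Complex.re_sum]
    congr 1; funext i
    have : star (y i) * y i = (Complex.normSq (y i) : ℂ) := by
      rw [Complex.star_def, Complex.normSq_eq_conj_mul_self]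
    rw [this]
    simp
  rw [hsum, hnx, Finset.mul_sum]
  apply Finset.sum_le_sum
  intro i _
  exact mul_le_mul_of_nonneg_right (ciInf_le (Set.Finite.bddBelow (Set.finite_range _)) i)
    (Complex.normSq_nonneg _)

open Matrix in
theorem stmt7 {n : Type*} [Fintype n] [DecidableEq n] [Nonempty n]
    (A B : Matrix n n ℂ) (hA : A.IsHermitian) (hB : B.PosDef)
    (z : ℂ) (hz : z.im ≠ 0) (b ytilde ystar : n → ℂ)
    (hy : (z • B - A).mulVec ystar = b)
    (r : n → ℂ) (hr : r = b - (z • B - A).mulVec ytilde) :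
    ∀ i, ‖ytilde i - ystar i‖ ≤
      |z.im|⁻¹ * (⨅ i, hB.1.eigenvalues i)⁻¹ * ‖(WithLp.equiv 2 (n → ℂ)).symm r‖ := by
  intro i
  set μ := ⨅ i, hB.1.eigenvalues i with hμ
  have hμpos : 0 < μ := by
    obtain ⟨j, hj⟩ := Finite.exists_min hB.1.eigenvalues
    exact lt_of_lt_of_le (hB.eigenvalues_pos j) (le_ciInf hj)
  set e := ytilde - ystar with he
  set M := z • B - A with hM
  have hMe : M *ᵥ e = -r := by
    rw [he, Matrix.mulVec_sub, hy, hr, neg_sub]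
  have hBre := herm_dot_real hB.1 e
  have hAre := herm_dot_real hA e
  have him : (star e ⬝ᵥ M *ᵥ e).im = z.im * (star e ⬝ᵥ B *ᵥ e).re := by
    rw [hM, Matrix.sub_mulVec, dotProduct_sub, Matrix.smul_mulVec,
      dotProduct_smul]
    simp [Complex.mul_im, hBre, hAre]
  have hCS : ‖(star e ⬝ᵥ M *ᵥ e)‖
      ≤ ‖(WithLp.equiv 2 (n → ℂ)).symm e‖ * ‖(WithLp.equiv 2 (n → ℂ)).symm r‖ := by
    rw [hMe, dotProduct_neg, norm_neg]
    have h := norm_inner_le_norm (𝕜 := ℂ) ((WithLp.equiv 2 (n → ℂ)).symm e)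
      ((WithLp.equiv 2 (n → ℂ)).symm r)
    rwa [show inner ℂ ((WithLp.equiv 2 (n → ℂ)).symm e) ((WithLp.equiv 2 (n → ℂ)).symm r) = star e ⬝ᵥ r by
      rw [dotProduct_comm]; rfl] at h
  have hBnonneg : 0 ≤ (star e ⬝ᵥ B *ᵥ e).re := hB.posSemidef.re_dotProduct_nonneg e
  have hchain : |z.im| * μ * ‖(WithLp.equiv 2 (n → ℂ)).symm e‖ ^ 2
      ≤ ‖(WithLp.equiv 2 (n → ℂ)).symm e‖ * ‖(WithLp.equiv 2 (n → ℂ)).symm r‖ := by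
    calc |z.im| * μ * ‖(WithLp.equiv 2 (n → ℂ)).symm e‖ ^ 2
        = |z.im| * (μ * ‖(WithLp.equiv 2 (n → ℂ)).symm e‖ ^ 2) := by ring
      _ ≤ |z.im| * (star e ⬝ᵥ B *ᵥ e).re :=
          mul_le_mul_of_nonneg_left (eig_min_bound hB e) (abs_nonneg _)
      _ = |z.im * (star e ⬝ᵥ B *ᵥ e).re| := by
          rw [abs_mul, abs_of_nonneg hBnonneg]
      _ = |(star e ⬝ᵥ M *ᵥ e).im| := by rw [him]
      _ ≤ ‖star e ⬝ᵥ M *ᵥ e‖ := Complex.abs_im_le_norm _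
      _ ≤ _ := hCS
  have hne : ‖(WithLp.equiv 2 (n → ℂ)).symm e‖
      ≤ |z.im|⁻¹ * μ⁻¹ * ‖(WithLp.equiv 2 (n → ℂ)).symm r‖ := by
    rcases eq_or_lt_of_le (norm_nonneg ((WithLp.equiv 2 (n → ℂ)).symm e)) with h0 | h0
    · rw [← h0]
      positivity
    · have h1 : |z.im| * μ * ‖(WithLp.equiv 2 (n → ℂ)).symm e‖
          ≤ ‖(WithLp.equiv 2 (n → ℂ)).symm r‖ := by
        have h2 : |z.im| * μ * ‖(WithLp.equiv 2 (n → ℂ)).symm e‖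
            * ‖(WithLp.equiv 2 (n → ℂ)).symm e‖
            ≤ ‖(WithLp.equiv 2 (n → ℂ)).symm r‖ * ‖(WithLp.equiv 2 (n → ℂ)).symm e‖ := by
          calc _ = |z.im| * μ * ‖(WithLp.equiv 2 (n → ℂ)).symm e‖ ^ 2 := by ring
            _ ≤ _ := hchain
            _ = _ := by ring
        exact le_of_mul_le_mul_right h2 h0
      have hzμ : 0 < |z.im| * μ := mul_pos (abs_pos.mpr hz) hμpos
      rw [show |z.im|⁻¹ * μ⁻¹ = (|z.im| * μ)⁻¹ by rw [mul_inv]]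
      rw [← mul_le_mul_iff_right₀ hzμ, ← mul_assoc, mul_inv_cancel₀ (ne_of_gt hzμ), one_mul]
      exact h1
  have hcoord : ‖e i‖ ≤ ‖(WithLp.equiv 2 (n → ℂ)).symm e‖ := by
    rw [EuclideanSpace.norm_eq]
    have h1 : ‖e i‖ = Real.sqrt (‖e i‖ ^ 2) := by
      rw [Real.sqrt_sq (norm_nonneg _)]
    rw [h1]
    apply Real.sqrt_le_sqrt
    exact Finset.single_le_sum (f := fun j => ‖e j‖ ^ 2)
      (fun j _ => sq_nonneg _) (Finset.mem_univ i)
  have : e i = ytilde i - ystar i := rfl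
  rw [← this]
  exact hcoord.trans hne
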